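/- arXiv:1709.01106 — 7 statements merged into one kernel-verified Lean document; each statement's English description precedes it below -/
import Mathlib

section
/- There is no real number B with -1 < B < 0 satisfying B·exp(√(1-B²)) + √(1-B²) + 1 = 0. -/
lemma key_ineq : ∀ s : ℝ, 0 < s → s ≤ 1 → (1 - s) * Real.exp (2 * s) < 1 + s := by
  have hmono : StrictMonoOn (fun x : ℝ => (1 + x) - (1 - x) * Real.exp (2 * x))
      (Set.Icc (0:ℝ) 1) := by
    apply strictMonoOn_of_deriv_pos (convex_Icc 0 1)
    · fun_prop
    · intro x hx
      rw [interior_Icc] at hx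
      have hd : HasDerivAt (fun x : ℝ => (1 + x) - (1 - x) * Real.exp (2 * x))
          (1 - ((-1) * Real.exp (2 * x) + (1 - x) * (Real.exp (2 * x) * 2))) x := by
        have h1 : HasDerivAt (fun x : ℝ => 1 + x) 1 x := by
          simpa using (hasDerivAt_id x).const_add 1
        have h2 : HasDerivAt (fun x : ℝ => 1 - x) (-1) x := by
          simpa using (hasDerivAt_id x).const_sub 1
        have h3 : HasDerivAt (fun x : ℝ => Real.exp (2 * x)) (Real.exp (2 * x) * 2) x := by
          have := (Real.hasDerivAt_exp (2 * x)).comp x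
            ((hasDerivAt_id x).const_mul 2)
          simp only [id, mul_one] at this
          exact this
        exact h1.sub (h2.mul h3)
      rw [hd.deriv]
      have hlt : (1 - 2 * x) * Real.exp (2 * x) < 1 := by
        have h : (-(2 * x)) + 1 < Real.exp (-(2 * x)) :=
          Real.add_one_lt_exp (by nlinarith [hx.1])
        have hpos : 0 < Real.exp (2 * x) := Real.exp_pos _
        have := mul_lt_mul_of_pos_right h hpos
        rw [← Real.exp_add] at this
        simp at this
        nlinarith
      nlinarith
  intro s hs hs1
  have h0 : (0:ℝ) ∈ Set.Icc (0:ℝ) 1 := by constructor <;> norm_num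
  have h1 : s ∈ Set.Icc (0:ℝ) 1 := ⟨le_of_lt hs, hs1⟩
  have := hmono h0 h1 hs
  simp at this
  nlinarith

theorem no_root_B :
    ¬ ∃ B : ℝ, -1 < B ∧ B < 0 ∧
      B * Real.exp (Real.sqrt (1 - B ^ 2)) + Real.sqrt (1 - B ^ 2) + 1 = 0 := by
  rintro ⟨B, h1, h2, heq⟩
  set s := Real.sqrt (1 - B ^ 2) with hsdef
  have hB2 : B ^ 2 < 1 := by nlinarith
  have h1B : (0:ℝ) < 1 - B ^ 2 := by linarith
  have hs2 : s ^ 2 = 1 - B ^ 2 := Real.sq_sqrt (le_of_lt h1B)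
  have hspos : 0 < s := Real.sqrt_pos.mpr h1B
  have hsle : s ≤ 1 := by
    nlinarith [hs2, sq_nonneg B]
  -- from the equation: B * exp s = -(s + 1)
  have hBe : B * Real.exp s = -(s + 1) := by linarith
  -- square both sides
  have hsq : B ^ 2 * Real.exp s ^ 2 = (s + 1) ^ 2 := by nlinarith [hBe]
  have hexp2 : Real.exp s ^ 2 = Real.exp (2 * s) := by
    rw [two_mul, Real.exp_add, sq]
  have heq2 : (1 - s ^ 2) * Real.exp (2 * s) = (s + 1) ^ 2 := by
    rw [← hexp2]
    nlinarith [hsq, hs2]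
  have hcancel : (1 - s) * Real.exp (2 * s) = 1 + s := by
    have hs1pos : 0 < s + 1 := by linarith
    have : (s + 1) * ((1 - s) * Real.exp (2 * s)) = (s + 1) * (1 + s) := by
      nlinarith [heq2]
    exact mul_left_cancel₀ (ne_of_gt hs1pos) this
  have := key_ineq s hspos hsle
  linarith
end

section
/- Let A ∈ ℝ and B ≥ 0. Then the system of equations (A+1)m₁ + 2m₁ log m₁ = B·m₂ and (A+1)m₂ + 2m₂ log m₂ = B·m₁ has exactly one solution with m₁, m₂ > 0, and this solution satisfies m₁ = m₂. -/
lemma sym_aux (A B m₁ m₂ : ℝ) (hB : 0 ≤ B) (h1 : 0 < m₁) (h2 : 0 < m₂)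
    (e1 : (A + 1) * m₁ + 2 * m₁ * Real.log m₁ = B * m₂)
    (e2 : (A + 1) * m₂ + 2 * m₂ * Real.log m₂ = B * m₁) : m₁ = m₂ := by
  have k1 : ((A + 1) * m₁ + 2 * m₁ * Real.log m₁) * m₂ = B * m₂ * m₂ := by rw [e1]
  have k2 : ((A + 1) * m₂ + 2 * m₂ * Real.log m₂) * m₁ = B * m₁ * m₁ := by rw [e2]
  have key : 2 * (m₁ * m₂) * (Real.log m₁ - Real.log m₂) = B * (m₂ ^ 2 - m₁ ^ 2) := by
    nlinarith [k1, k2]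
  rcases lt_trichotomy m₁ m₂ with h | h | h
  · exfalso
    have hl := Real.log_lt_log h1 h
    have hL : 2 * (m₁ * m₂) * (Real.log m₁ - Real.log m₂) < 0 := by
      have := mul_pos h1 h2; nlinarith
    have hR : 0 ≤ B * (m₂ ^ 2 - m₁ ^ 2) := by
      apply mul_nonneg hB; nlinarith
    linarith
  · exact h
  · exfalso
    have hl := Real.log_lt_log h2 h
    have hL : 0 < 2 * (m₁ * m₂) * (Real.log m₁ - Real.log m₂) := by
      have := mul_pos h1 h2; nlinarith
    have hR : B * (m₂ ^ 2 - m₁ ^ 2) ≤ 0 := by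
      apply mul_nonpos_of_nonneg_of_nonpos hB; nlinarith
    linarith

theorem unique_symmetric_solution (A B : ℝ) (hB : 0 ≤ B) :
    (∃! p : ℝ × ℝ, 0 < p.1 ∧ 0 < p.2 ∧
        (A + 1) * p.1 + 2 * p.1 * Real.log p.1 = B * p.2 ∧
        (A + 1) * p.2 + 2 * p.2 * Real.log p.2 = B * p.1) ∧
    (∀ m₁ m₂ : ℝ, 0 < m₁ → 0 < m₂ →
        (A + 1) * m₁ + 2 * m₁ * Real.log m₁ = B * m₂ →
        (A + 1) * m₂ + 2 * m₂ * Real.log m₂ = B * m₁ → m₁ = m₂) := by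
  constructor
  · set m₀ : ℝ := Real.exp ((B - A - 1) / 2) with hm₀
    have hpos : 0 < m₀ := Real.exp_pos _
    have hlog : Real.log m₀ = (B - A - 1) / 2 := Real.log_exp _
    have heq : (A + 1) * m₀ + 2 * m₀ * Real.log m₀ = B * m₀ := by
      rw [hlog]; ring
    refine ⟨(m₀, m₀), ⟨hpos, hpos, heq, heq⟩, ?_⟩
    rintro ⟨x, y⟩ ⟨hx, hy, ex, ey⟩
    have hxy : x = y := sym_aux A B x y hB hx hy ex ey
    subst hxy
    have hx' : (A + 1) + 2 * Real.log x = B := by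
      have := ex
      field_simp at this ⊢
      nlinarith [hx]
    have : Real.log x = (B - A - 1) / 2 := by linarith
    have : x = m₀ := by
      rw [hm₀, ← this, Real.exp_log hx]
    simp [this]
  · exact fun m₁ m₂ h1 h2 e1 e2 => sym_aux A B m₁ m₂ hB h1 h2 e1 e2
end

section
/- Let A, B ∈ ℝ with -1 < B < 0. Then the system (A+1)t + 2t log t = Bs, (A+1)s + 2s log s = Bt, and Bt² + 2ts + Bs² = 0 has no solution with t, s > 0. -/
noncomputable def Faux : ℝ → ℝ := fun x => (x ^ 2 + 1) * Real.log x - (x ^ 2 - 1)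

lemma Faux_hasDerivAt {x : ℝ} (hx : 0 < x) :
    HasDerivAt Faux (2 * x * Real.log x + (x ^ 2 + 1) / x - 2 * x) x := by
  have h1 : HasDerivAt (fun x : ℝ => x ^ 2 + 1) (2 * x) x := by
    simpa using ((hasDerivAt_pow 2 x).add_const 1)
  have h2 : HasDerivAt Real.log (1 / x) x := by
    simpa [one_div] using Real.hasDerivAt_log hx.ne'
  have h3 : HasDerivAt (fun x : ℝ => x ^ 2 - 1) (2 * x) x := by
    simpa using ((hasDerivAt_pow 2 x).sub_const 1)
  have := (h1.mul h2).sub h3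
  exact this.congr_deriv (by ring)

lemma Faux_deriv_pos {x : ℝ} (hx : 0 < x) (hx1 : x ≠ 1) :
    0 < 2 * x * Real.log x + (x ^ 2 + 1) / x - 2 * x := by
  have hlog : Real.log x⁻¹ < x⁻¹ - 1 :=
    Real.log_lt_sub_one_of_pos (inv_pos.mpr hx) (by simpa using inv_ne_one.mpr hx1)
  rw [Real.log_inv] at hlog
  have hdiv : (x ^ 2 + 1) / x * x = x ^ 2 + 1 := div_mul_cancel₀ _ hx.ne'
  have hxinv : x⁻¹ * x = 1 := inv_mul_cancel₀ hx.ne'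
  have key : 0 < (2 * x * Real.log x + (x ^ 2 + 1) / x - 2 * x) * x := by
    nlinarith [sq_nonneg (x - 1), mul_pos hx hx]
  by_contra h
  push_neg at h
  nlinarith [mul_nonpos_of_nonpos_of_nonneg h hx.le]

lemma Faux_contOn : ContinuousOn Faux (Set.Ioi (0 : ℝ)) := by
  apply ContinuousOn.sub
  · exact ((continuousOn_id.pow 2).add continuousOn_const).mul (Real.continuousOn_log.mono (by
        intro x hx; simp only [Set.mem_compl_iff, Set.mem_singleton_iff]
        exact ne_of_gt hx))
  · fun_prop

lemma Faux_eq_one : Faux 1 = 0 := by simp [Faux]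

lemma Faux_root {u : ℝ} (hu : 0 < u) (h : (u ^ 2 + 1) * Real.log u = u ^ 2 - 1) : u = 1 := by
  have hFu : Faux u = 0 := by simp [Faux, h]
  by_contra hne
  rcases lt_or_gt_of_ne hne with hlt | hgt
  · -- u < 1 : F strictly mono on [u, 1], F u < F 1 = 0
    have hmono : StrictMonoOn Faux (Set.Icc u 1) := by
      apply strictMonoOn_of_deriv_pos (convex_Icc u 1)
      · exact Faux_contOn.mono (fun x hx => lt_of_lt_of_le hu hx.1)
      · intro x hx
        rw [interior_Icc] at hx
        have hx0 : 0 < x := lt_trans hu hx.1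
        rw [(Faux_hasDerivAt hx0).deriv]
        exact Faux_deriv_pos hx0 (ne_of_lt hx.2)
    have := hmono (Set.left_mem_Icc.mpr hlt.le) (Set.right_mem_Icc.mpr hlt.le) hlt
    rw [hFu, Faux_eq_one] at this
    exact lt_irrefl _ this
  · -- u > 1 : F strictly mono on [1, u], 0 = F 1 < F u
    have hmono : StrictMonoOn Faux (Set.Icc 1 u) := by
      apply strictMonoOn_of_deriv_pos (convex_Icc 1 u)
      · exact Faux_contOn.mono (fun x hx => lt_of_lt_of_le one_pos hx.1)
      · intro x hx
        rw [interior_Icc] at hx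
        have hx0 : 0 < x := lt_trans one_pos hx.1
        rw [(Faux_hasDerivAt hx0).deriv]
        exact Faux_deriv_pos hx0 (ne_of_gt hx.1)
    have := hmono (Set.left_mem_Icc.mpr hgt.le) (Set.right_mem_Icc.mpr hgt.le) hgt
    rw [hFu, Faux_eq_one] at this
    exact lt_irrefl _ this

theorem no_degenerate_solution (A B : ℝ) (hB1 : -1 < B) (hB2 : B < 0) :
    ¬ ∃ t s : ℝ, 0 < t ∧ 0 < s ∧
      (A + 1) * t + 2 * t * Real.log t = B * s ∧
      (A + 1) * s + 2 * s * Real.log s = B * t ∧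
      B * t ^ 2 + 2 * t * s + B * s ^ 2 = 0 := by
  rintro ⟨t, s, ht, hs, h1, h2, h3⟩
  -- t·h2 − s·h1 gives 2ts(log s − log t) = B(t² − s²)
  have h4 : 2 * t * s * (Real.log s - Real.log t) = B * (t ^ 2 - s ^ 2) := by
    linear_combination t * h2 - s * h1
  -- combine with h3 : multiply h4 by (t²+s²), use B(t²+s²) = −2ts
  have h5 : 2 * t * s * ((t ^ 2 + s ^ 2) * (Real.log s - Real.log t) - (s ^ 2 - t ^ 2)) = 0 := by
    linear_combination (t ^ 2 + s ^ 2) * h4 + (t ^ 2 - s ^ 2) * h3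
  have hts : (2 * t * s : ℝ) ≠ 0 := by positivity
  have h6 : (t ^ 2 + s ^ 2) * (Real.log s - Real.log t) = s ^ 2 - t ^ 2 := by
    rcases mul_eq_zero.mp h5 with h | h
    · exact absurd h hts
    · linarith
  -- set u = s/t
  set u := s / t with hu_def
  have hu : 0 < u := div_pos hs ht
  have hlog : Real.log s - Real.log t = Real.log u := (Real.log_div hs.ne' ht.ne').symm
  have h7 : (u ^ 2 + 1) * Real.log u = u ^ 2 - 1 := by
    have ht2 : (t : ℝ) ^ 2 ≠ 0 := by positivity
    rw [hlog] at h6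
    have hsu : s = u * t := by rw [hu_def, div_mul_cancel₀ s ht.ne']
    rw [hsu] at h6
    have expand : (u ^ 2 + 1) * Real.log u * t ^ 2 = (u ^ 2 - 1) * t ^ 2 := by
      linear_combination h6
    have := mul_right_cancel₀ ht2 expand
    linarith
  have hu1 : u = 1 := Faux_root hu h7
  have hst : s = t := by
    rw [hu_def, div_eq_one_iff_eq ht.ne'] at hu1
    linarith
  rw [hst] at h3
  nlinarith [sq_nonneg t, mul_pos ht ht]
end

section
/- Let A ∈ ℝ, C ∈ ℝ, and suppose (m₁, m₂) ∈ (0,∞)² satisfies (A+1)m₁ + 2m₁ log m₁ = 4π C m₂ and (A+1)m₂ + 2m₂ log m₂ = 4π C m₁. Define ψ(m₁,m₂) = A(m₁²+m₂²) + 2(m₁² log m₁ + m₂² log m₂) - 8π C m₁ m₂. Then the determinant of the Hessian of ψ at (m₁, m₂) equals 32π(m₂/m₁ + m₁/m₂)·C + 16. -/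
/-- The reduced functional ψ(m₁,m₂) = A(m₁²+m₂²) + 2(m₁² log m₁ + m₂² log m₂) - 8πC m₁m₂. -/
noncomputable def psiRed (A C : ℝ) (m₁ m₂ : ℝ) : ℝ :=
  A * (m₁ ^ 2 + m₂ ^ 2) + 2 * (m₁ ^ 2 * Real.log m₁ + m₂ ^ 2 * Real.log m₂)
    - 8 * Real.pi * C * m₁ * m₂

lemma hasDeriv_x (A C m₂ : ℝ) {x : ℝ} (hx : x ≠ 0) :
    HasDerivAt (fun x' => psiRed A C x' m₂)
      (2 * A * x + (4 * x * Real.log x + 2 * x) - 8 * Real.pi * C * m₂) x := by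
  have h1 : HasDerivAt (fun x' : ℝ => x' ^ 2) (2 * x) x := by
    simpa using hasDerivAt_pow 2 x
  have h3 : HasDerivAt (fun x' : ℝ => x' ^ 2 * Real.log x')
      (2 * x * Real.log x + x ^ 2 * x⁻¹) x := h1.mul (Real.hasDerivAt_log hx)
  have h4 : HasDerivAt (fun x' : ℝ => 8 * Real.pi * C * x' * m₂)
      (8 * Real.pi * C * m₂) x := by
    simpa using ((hasDerivAt_id x).const_mul (8 * Real.pi * C)).mul_const m₂
  have := (((h1.add_const (m₂ ^ 2)).const_mul A).add
      ((h3.add_const (m₂ ^ 2 * Real.log m₂)).const_mul 2)).sub h4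
  refine this.congr_deriv ?_
  field_simp [psiRed]
  ring

theorem hessian_det_formula (A C : ℝ) (m₁ m₂ : ℝ) (h₁ : 0 < m₁) (h₂ : 0 < m₂)
    (e₁ : (A + 1) * m₁ + 2 * m₁ * Real.log m₁ = 4 * Real.pi * C * m₂)
    (e₂ : (A + 1) * m₂ + 2 * m₂ * Real.log m₂ = 4 * Real.pi * C * m₁) :
    deriv (fun x => deriv (fun x' => psiRed A C x' m₂) x) m₁ *
      deriv (fun y => deriv (fun y' => psiRed A C m₁ y') y) m₂ -
      deriv (fun y => deriv (fun x => psiRed A C x y) m₁) m₂ ^ 2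
    = 32 * Real.pi * (m₂ / m₁ + m₁ / m₂) * C + 16 := by
  -- second derivative in x
  have hFd : ∀ (c : ℝ) {t : ℝ}, t ≠ 0 → HasDerivAt
      (fun x : ℝ => 2 * A * x + (4 * x * Real.log x + 2 * x) - 8 * Real.pi * C * c)
      (2 * A + (4 * Real.log t + 4 + 2)) t := by
    intro c t ht
    have h3 : HasDerivAt (fun x : ℝ => 4 * x * Real.log x)
        (4 * Real.log t + 4 * t * t⁻¹) t := by
      exact (((hasDerivAt_id t).const_mul 4).mul (Real.hasDerivAt_log ht)).congr_deriv (by simp)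
    have h4 : HasDerivAt (fun x : ℝ => 2 * A * x) (2 * A) t := by
      simpa using (hasDerivAt_id t).const_mul (2 * A)
    have h5 : HasDerivAt (fun x : ℝ => 2 * x) 2 t := by
      simpa using (hasDerivAt_id t).const_mul 2
    have := ((h4.add (h3.add h5)).sub_const (8 * Real.pi * C * c))
    refine this.congr_deriv ?_
    field_simp
  have hxx : deriv (fun x => deriv (fun x' => psiRed A C x' m₂) x) m₁
      = 2 * A + (4 * Real.log m₁ + 4 + 2) := by
    have hev : (fun x => deriv (fun x' => psiRed A C x' m₂) x) =ᶠ[nhds m₁]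
        (fun x : ℝ => 2 * A * x + (4 * x * Real.log x + 2 * x) - 8 * Real.pi * C * m₂) := by
      filter_upwards [eventually_ne_nhds h₁.ne'] with x hx
      exact (hasDeriv_x A C m₂ hx).deriv
    rw [hev.deriv_eq]
    exact (hFd m₂ h₁.ne').deriv
  -- second derivative in y: by symmetry of psiRed
  have hsymm : ∀ a b : ℝ, psiRed A C a b = psiRed A C b a := by
    intro a b; unfold psiRed; ring
  have hyy : deriv (fun y => deriv (fun y' => psiRed A C m₁ y') y) m₂
      = 2 * A + (4 * Real.log m₂ + 4 + 2) := by
    have hev : (fun y => deriv (fun y' => psiRed A C m₁ y') y) =ᶠ[nhds m₂]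
        (fun y : ℝ => 2 * A * y + (4 * y * Real.log y + 2 * y) - 8 * Real.pi * C * m₁) := by
      filter_upwards [eventually_ne_nhds h₂.ne'] with y hy
      have : (fun y' => psiRed A C m₁ y') = fun y' => psiRed A C y' m₁ := by
        funext y'; exact hsymm m₁ y'
      rw [this]
      exact (hasDeriv_x A C m₁ hy).deriv
    rw [hev.deriv_eq]
    exact (hFd m₁ h₂.ne').deriv
  -- mixed derivative
  have hxy : deriv (fun y => deriv (fun x => psiRed A C x y) m₁) m₂
      = -(8 * Real.pi * C) := by
    have : (fun y => deriv (fun x => psiRed A C x y) m₁)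
        = fun y : ℝ => 2 * A * m₁ + (4 * m₁ * Real.log m₁ + 2 * m₁) - 8 * Real.pi * C * y := by
      funext y
      exact (hasDeriv_x A C y h₁.ne').deriv
    rw [this]
    have := ((hasDerivAt_const m₂ (2 * A * m₁ + (4 * m₁ * Real.log m₁ + 2 * m₁))).sub
      ((hasDerivAt_id m₂).const_mul (8 * Real.pi * C)))
    simpa using this.deriv
  rw [hxx, hyy, hxy]
  -- algebra using the equations
  have k₁ : 2 * A + (4 * Real.log m₁ + 4 + 2) = 8 * Real.pi * C * m₂ / m₁ + 4 := by
    have := e₁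
    field_simp
    nlinarith [this]
  have k₂ : 2 * A + (4 * Real.log m₂ + 4 + 2) = 8 * Real.pi * C * m₁ / m₂ + 4 := by
    field_simp
    nlinarith [e₂]
  rw [k₁, k₂]
  field_simp
  ring
end

section
/- Let A ∈ ℝ and C ≥ 0, and suppose (m₁, m₂) ∈ (0,∞)² satisfies the system (A+1)mᵢ + 2mᵢ log mᵢ = 4π C mⱼ for {i,j} = {1,2}. Then the determinant of the Hessian of ψ(m₁,m₂) = A(m₁²+m₂²) + 2(m₁² log m₁ + m₂² log m₂) - 8π C m₁m₂ at (m₁,m₂) is at least 16; in particular (m₁,m₂) is a nondegenerate critical point of ψ. -/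
lemma hasDeriv_sq_log {x : ℝ} (hx : 0 < x) :
    HasDerivAt (fun t : ℝ => t ^ 2 * Real.log t) (2 * x * Real.log x + x) x := by
  have h := (hasDerivAt_pow 2 x).mul (Real.hasDerivAt_log hx.ne')
  convert h using 1
  · rfl
  · rfl
  · rfl
  field_simp
  ring

lemma hasDeriv1 (A C y : ℝ) {x : ℝ} (hx : 0 < x) :
    HasDerivAt (fun x' => psiRed A C x' y)
      (2 * A * x + (4 * x * Real.log x + 2 * x) - 8 * Real.pi * C * y) x := by
  have h1 : HasDerivAt (fun x' : ℝ => A * (x' ^ 2 + y ^ 2)) (A * (2 * x)) x := by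
    have := ((hasDerivAt_pow 2 x).add_const (y ^ 2)).const_mul A
    convert this using 1
    · rfl
    · rfl
    push_cast; ring
  have h2 : HasDerivAt (fun x' : ℝ => 2 * (x' ^ 2 * Real.log x' + y ^ 2 * Real.log y))
      (2 * (2 * x * Real.log x + x)) x :=
    ((hasDeriv_sq_log hx).add_const _).const_mul 2
  have h3 : HasDerivAt (fun x' : ℝ => 8 * Real.pi * C * x' * y)
      (8 * Real.pi * C * y) x := by
    simpa using ((hasDerivAt_id x).const_mul (8 * Real.pi * C)).mul_const y
  have h := (h1.add h2).sub h3
  have heq : 2 * A * x + (4 * x * Real.log x + 2 * x) - 8 * Real.pi * C * y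
      = A * (2 * x) + 2 * (2 * x * Real.log x + x) - 8 * Real.pi * C * y := by ring
  rw [heq]
  exact h

lemma hasDeriv2 (A C x : ℝ) {y : ℝ} (hy : 0 < y) :
    HasDerivAt (fun y' => psiRed A C x y')
      (2 * A * y + (4 * y * Real.log y + 2 * y) - 8 * Real.pi * C * x) y := by
  have h1 : HasDerivAt (fun y' : ℝ => A * (x ^ 2 + y' ^ 2)) (A * (2 * y)) y := by
    have := (((hasDerivAt_pow 2 y)).const_add (x ^ 2)).const_mul A
    convert this using 1
    · rfl
    · rfl
    push_cast; ring
  have h2 : HasDerivAt (fun y' : ℝ => 2 * (x ^ 2 * Real.log x + y' ^ 2 * Real.log y'))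
      (2 * (2 * y * Real.log y + y)) y :=
    ((hasDeriv_sq_log hy).const_add _).const_mul 2
  have h3 : HasDerivAt (fun y' : ℝ => 8 * Real.pi * C * x * y')
      (8 * Real.pi * C * x) y := by
    simpa using (hasDerivAt_id y).const_mul (8 * Real.pi * C * x)
  have h := (h1.add h2).sub h3
  have heq : 2 * A * y + (4 * y * Real.log y + 2 * y) - 8 * Real.pi * C * x
      = A * (2 * y) + 2 * (2 * y * Real.log y + y) - 8 * Real.pi * C * x := by ring
  rw [heq]
  exact h

lemma hasDeriv_lin (a c : ℝ) {x : ℝ} (hx : 0 < x) :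
    HasDerivAt (fun t : ℝ => 2 * a * t + (4 * t * Real.log t + 2 * t) - c)
      (2 * a + (4 * (Real.log x + 1) + 2)) x := by
  have hlog : HasDerivAt (fun t : ℝ => t * Real.log t) (Real.log x + 1) x := by
    have := (hasDerivAt_id x).mul (Real.hasDerivAt_log hx.ne')
    convert this using 1
    · rfl
    · rfl
    · rfl
    field_simp
    simp only [id]
    ring
  have h1 : HasDerivAt (fun t : ℝ => 2 * a * t) (2 * a) x := by
    have := (hasDerivAt_id x).const_mul (2 * a)
    simpa using this
  have h2 : HasDerivAt (fun t : ℝ => 4 * t * Real.log t + 2 * t)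
      (4 * (Real.log x + 1) + 2) x := by
    have h2a : HasDerivAt (fun t : ℝ => 4 * (t * Real.log t)) (4 * (Real.log x + 1)) x :=
      hlog.const_mul 4
    have h2b : HasDerivAt (fun t : ℝ => 2 * t) (2 : ℝ) x := by
      simpa using (hasDerivAt_id x).const_mul (2 : ℝ)
    have := h2a.add h2b
    convert this using 2 with t
    · rfl
    · rfl
    simp only [Pi.add_apply]
    ring
  exact (h1.add h2).sub_const c

theorem hessian_det_ge (A C : ℝ) (hC : 0 ≤ C) (m₁ m₂ : ℝ) (h₁ : 0 < m₁) (h₂ : 0 < m₂)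
    (e₁ : (A + 1) * m₁ + 2 * m₁ * Real.log m₁ = 4 * Real.pi * C * m₂)
    (e₂ : (A + 1) * m₂ + 2 * m₂ * Real.log m₂ = 4 * Real.pi * C * m₁) :
    16 ≤ deriv (fun x => deriv (fun x' => psiRed A C x' m₂) x) m₁ *
        deriv (fun y => deriv (fun y' => psiRed A C m₁ y') y) m₂ -
        deriv (fun y => deriv (fun x => psiRed A C x y) m₁) m₂ ^ 2 := by
  have hd11 : deriv (fun x => deriv (fun x' => psiRed A C x' m₂) x) m₁
      = 2 * A + 4 * Real.log m₁ + 6 := by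
    have hev : (fun x => deriv (fun x' => psiRed A C x' m₂) x) =ᶠ[nhds m₁]
        (fun x => 2 * A * x + (4 * x * Real.log x + 2 * x) - 8 * Real.pi * C * m₂) := by
      filter_upwards [Ioi_mem_nhds h₁] with x hx
      exact (hasDeriv1 A C m₂ hx).deriv
    rw [hev.deriv_eq, (hasDeriv_lin A (8 * Real.pi * C * m₂) h₁).deriv]
    ring
  have hd22 : deriv (fun y => deriv (fun y' => psiRed A C m₁ y') y) m₂
      = 2 * A + 4 * Real.log m₂ + 6 := by
    have hev : (fun y => deriv (fun y' => psiRed A C m₁ y') y) =ᶠ[nhds m₂]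
        (fun y => 2 * A * y + (4 * y * Real.log y + 2 * y) - 8 * Real.pi * C * m₁) := by
      filter_upwards [Ioi_mem_nhds h₂] with y hy
      exact (hasDeriv2 A C m₁ hy).deriv
    rw [hev.deriv_eq, (hasDeriv_lin A (8 * Real.pi * C * m₁) h₂).deriv]
    ring
  have hd12 : deriv (fun y => deriv (fun x => psiRed A C x y) m₁) m₂
      = -(8 * Real.pi * C) := by
    have heq : (fun y => deriv (fun x => psiRed A C x y) m₁)
        = fun y => 2 * A * m₁ + (4 * m₁ * Real.log m₁ + 2 * m₁) - 8 * Real.pi * C * y :=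
      funext fun y => (hasDeriv1 A C y h₁).deriv
    rw [heq]
    have h : HasDerivAt
        (fun y : ℝ => 2 * A * m₁ + (4 * m₁ * Real.log m₁ + 2 * m₁) - 8 * Real.pi * C * y)
        (-(8 * Real.pi * C)) m₂ := by
      have h' : HasDerivAt (fun y : ℝ => 8 * Real.pi * C * y) (8 * Real.pi * C) m₂ := by
        simpa using (hasDerivAt_id m₂).const_mul (8 * Real.pi * C)
      simpa using h'.const_sub (2 * A * m₁ + (4 * m₁ * Real.log m₁ + 2 * m₁))
    exact h.deriv
  rw [hd11, hd22, hd12]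
  have E1 : (2 * A + 4 * Real.log m₁ + 6) * m₁ = 8 * Real.pi * C * m₂ + 4 * m₁ := by
    linear_combination 2 * e₁
  have E2 : (2 * A + 4 * Real.log m₂ + 6) * m₂ = 8 * Real.pi * C * m₁ + 4 * m₂ := by
    linear_combination 2 * e₂
  have key : ((2 * A + 4 * Real.log m₁ + 6) * (2 * A + 4 * Real.log m₂ + 6)
      - (-(8 * Real.pi * C)) ^ 2 - 16) * (m₁ * m₂)
      = 32 * Real.pi * C * (m₁ ^ 2 + m₂ ^ 2) := by
    linear_combination (2 * A + 4 * Real.log m₂ + 6) * m₂ * E1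
      + (8 * Real.pi * C * m₂ + 4 * m₁) * E2
  have hm : 0 < m₁ * m₂ := mul_pos h₁ h₂
  have hrhs : 0 ≤ 32 * Real.pi * C * (m₁ ^ 2 + m₂ ^ 2) := by positivity
  nlinarith [key, hm, hrhs]
end

section
/- Let δ > 0 and m > 0 be constants. For sufficiently small ε > 0, the integral ∫_{δ√ε}^{δ/|log ε|} s·e^{16λm² (log s)²} ds is O(λ) as ε → 0, where λ > 0 is related to ε by log(1/ε⁴) = 1/(2λm²) - 2 log(2m²). -/
set_option maxHeartbeats 1000000

theorem integral_big_O_lambda (δ m : ℝ) (hδ : 0 < δ) (hm : 0 < m) :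
    ∃ C > (0 : ℝ), ∃ ε₀ > (0 : ℝ), ∀ ε lam : ℝ, 0 < ε → ε < ε₀ → 0 < lam →
      Real.log (1 / ε ^ 4) = 1 / (2 * lam * m ^ 2) - 2 * Real.log (2 * m ^ 2) →
      (∫ s in (δ * Real.sqrt ε)..(δ / |Real.log ε|),
          s * Real.exp (16 * lam * m ^ 2 * Real.log s ^ 2)) ≤ C * lam := by
  set P := Real.log (2 * m ^ 2) with hPdef
  set Q := Real.log δ with hQdef
  set c₁ := |2 * P + 8 * Q| with hc₁def
  set E := Real.exp (c₁ / 6 + 1) with hEdef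
  set M := 6 + δ + 6 * |P| + 10 * |Q| + c₁ * |Q| + c₁ with hMdef
  have hc₁0 : 0 ≤ c₁ := abs_nonneg _
  have hE0 : 0 < E := Real.exp_pos _
  have hM0 : 0 < M := by positivity
  refine ⟨20 * E * δ * m ^ 2, by positivity, Real.exp (-M), Real.exp_pos _, ?_⟩
  intro ε lam hε hεlt hlam hrel
  set X := -Real.log ε with hXdef
  have hXM : M < X := by
    have h := Real.log_lt_log hε hεlt
    rw [Real.log_exp] at h
    simp only [hXdef]; linarith
  have hX0 : 0 < X := lt_trans hM0 hXM
  have hlogεneg : Real.log ε < 0 := by simp only [hXdef] at hX0; linarith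
  have habs : |Real.log ε| = X := by rw [abs_of_neg hlogεneg]
  -- the relation gives L = 1/(2 lam m²)
  set L := 4 * X + 2 * P with hLdef
  have hrel' : 4 * X = 1 / (2 * lam * m ^ 2) - 2 * P := by
    have h1 : Real.log (1 / ε ^ 4) = -(4 * Real.log ε) := by
      rw [one_div, Real.log_inv, Real.log_pow]; push_cast; ring
    rw [h1] at hrel
    simp only [hXdef]; linarith
  have hLam : 2 * lam * m ^ 2 * L = 1 := by
    have hne : 2 * lam * m ^ 2 ≠ 0 := by positivity
    have : L = 1 / (2 * lam * m ^ 2) := by rw [hLdef]; linarith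
    rw [this]; field_simp
  have hL0 : 0 < L := by
    by_contra hcon
    push_neg at hcon
    have h2 : 2 * lam * m ^ 2 * L ≤ 0 :=
      mul_nonpos_of_nonneg_of_nonpos (by positivity) hcon
    linarith
  have hPn : (0:ℝ) ≤ |P| := abs_nonneg P
  have hQn : (0:ℝ) ≤ |Q| := abs_nonneg Q
  have hcQn : (0:ℝ) ≤ c₁ * |Q| := mul_nonneg hc₁0 hQn
  have habsP : |P| < X / 6 := by linarith
  have hL3 : 3 * X ≤ L := by
    have := neg_abs_le P
    linarith
  have hL5 : L ≤ 5 * X := by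
    have := le_abs_self P
    linarith
  -- endpoints
  set a := δ * Real.sqrt ε with hadef
  set b := δ / |Real.log ε| with hbdef
  have hsε : 0 < Real.sqrt ε := Real.sqrt_pos.mpr hε
  have ha0 : 0 < a := by positivity
  have hb0 : 0 < b := by rw [hbdef, habs]; positivity
  have hbX : b = δ / X := by rw [hbdef, habs]
  have hb1 : b ≤ 1 := by
    rw [hbX, div_le_one hX0]; linarith
  have hloga : Real.log a = Q - X / 2 := by
    rw [hadef, Real.log_mul (ne_of_gt hδ) (ne_of_gt hsε), Real.log_sqrt hε.le, ← hQdef]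
    simp only [hXdef]; ring
  have hab : a ≤ b := by
    rw [hadef, hbX]
    have hsle : Real.sqrt ε ≤ 1 / X := by
      have h1 : Real.sqrt ε = Real.exp (-(X / 2)) := by
        rw [← Real.exp_log hsε, Real.log_sqrt hε.le]
        congr 1
        simp only [hXdef]; ring
      have h2 := Real.add_one_le_exp (X / 4)
      have h3 : Real.exp (X / 4) * Real.exp (X / 4) = Real.exp (X / 2) := by
        rw [← Real.exp_add]; ring_nf
      have h4 : X ≤ Real.exp (X / 2) := by
        have h5 : (X / 4 + 1) * (X / 4 + 1) ≤ Real.exp (X / 4) * Real.exp (X / 4) :=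
          mul_le_mul h2 h2 (by linarith) (Real.exp_nonneg _)
        have h6 := sq_nonneg (X / 4 - 1)
        nlinarith [h5, h3, h6]
      rw [h1, Real.exp_neg, one_div]
      exact inv_anti₀ hX0 h4
    calc δ * Real.sqrt ε ≤ δ * (1 / X) := mul_le_mul_of_nonneg_left hsle hδ.le
      _ = δ / X := by ring
  -- the comparison exponent
  set c := 16 * lam * m ^ 2 with hcdef
  have hc0 : 0 < c := by positivity
  have hcL : c * L = 8 := by rw [hcdef]; linear_combination 8 * hLam
  set β := c * Real.log a with hβdef
  have hβL : β * L = 8 * Q - 4 * X := by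
    rw [hβdef, hloga]; linear_combination (Q - X / 2) * hcL
  have h2βL : (2 + β) * L = 4 * X + 4 * P + 8 * Q := by
    linear_combination hβL + 2 * hLdef
  have h1βL : (1 + β) * L = 2 * P + 8 * Q := by
    linear_combination hβL + hLdef
  have h2β : 1 / 2 ≤ 2 + β := by
    have key2 : (2 + β - 1 / 2) * L = 2 * X + 3 * P + 8 * Q := by
      linear_combination h2βL - (1 / 2) * hLdef
    have keypos : 0 ≤ (2 + β - 1 / 2) * L := by
      rw [key2]
      have h1 := neg_abs_le P
      have h2 := neg_abs_le Q
      linarith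
    have := (mul_nonneg_iff_of_pos_right hL0).mp keypos
    linarith
  -- pointwise bound on the integrand
  set r := 1 + β with hrdef
  have hpt : ∀ x ∈ Set.Icc a b, x * Real.exp (c * Real.log x ^ 2) ≤ x ^ r := by
    intro x hx
    have hx0 : 0 < x := lt_of_lt_of_le ha0 hx.1
    have hxb : x ≤ 1 := le_trans hx.2 hb1
    have hlx : Real.log x ≤ 0 := Real.log_nonpos hx0.le hxb
    have hla : Real.log a ≤ Real.log x := Real.log_le_log ha0 hx.1
    rw [Real.rpow_def_of_pos hx0]
    nth_rewrite 1 [← Real.exp_log hx0]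
    rw [← Real.exp_add]
    apply Real.exp_le_exp.mpr
    have key : c * Real.log x ^ 2 ≤ c * Real.log a * Real.log x := by
      have hp := mul_nonneg (mul_nonneg hc0.le (neg_nonneg.mpr hlx)) (sub_nonneg.mpr hla)
      have e : (c * -Real.log x) * (Real.log x - Real.log a)
          = c * Real.log a * Real.log x - c * Real.log x ^ 2 := by ring
      rw [e] at hp
      exact sub_nonneg.mp hp
    rw [hrdef, hβdef]
    have e2 : Real.log x * (1 + c * Real.log a)
        = Real.log x + c * Real.log a * Real.log x := by ring
    rw [e2]
    exact add_le_add le_rfl key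
  -- integrability
  have hmem : ∀ x ∈ Set.uIcc a b, x ≠ 0 := by
    intro x hx
    rw [Set.uIcc_of_le hab] at hx
    exact ne_of_gt (lt_of_lt_of_le ha0 hx.1)
  have hintf : IntervalIntegrable (fun s => s * Real.exp (c * Real.log s ^ 2))
      MeasureTheory.volume a b := by
    apply ContinuousOn.intervalIntegrable
    apply ContinuousOn.mul continuousOn_id
    apply Real.continuous_exp.comp_continuousOn
    apply ContinuousOn.mul continuousOn_const
    exact (Real.continuousOn_log.mono (fun x hx => hmem x hx)).pow 2
  have hintg : IntervalIntegrable (fun s => s ^ r) MeasureTheory.volume a b := by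
    apply ContinuousOn.intervalIntegrable
    exact ContinuousOn.rpow_const continuousOn_id (fun x hx => Or.inl (hmem x hx))
  have hmono := intervalIntegral.integral_mono_on hab hintf hintg hpt
  have hrineq : -1 < r := by rw [hrdef]; linarith
  have hval : (∫ x in a..b, x ^ r) = (b ^ (r + 1) - a ^ (r + 1)) / (r + 1) :=
    integral_rpow (Or.inl hrineq)
  have hr1 : r + 1 = 2 + β := by rw [hrdef]; ring
  -- bound b ^ (2+β)
  have hbE : b ^ (r + 1) ≤ b * E := by
    rw [hr1, Real.rpow_def_of_pos hb0]
    have h1 : Real.log b * (2 + β) = Real.log b + (1 + β) * Real.log b := by ring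
    have hlb : Real.log b ≤ 0 := Real.log_nonpos hb0.le hb1
    have h2 : (1 + β) * Real.log b ≤ c₁ / 6 + 1 := by
      rcases le_or_gt 0 (1 + β) with h | h
      · have hm0 := mul_nonpos_of_nonneg_of_nonpos h hlb
        exact hm0.trans (by positivity)
      · have hla : Real.log a ≤ Real.log b := Real.log_le_log ha0 hab
        have h3 : (1 + β) * Real.log b ≤ (1 + β) * Real.log a :=
          mul_le_mul_of_nonpos_left hla h.le
        have h5 : (1 + β) * Real.log a * L = (2 * P + 8 * Q) * (Q - X / 2) := by
          rw [hloga]; linear_combination (Q - X / 2) * h1βL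
        have h6 : (2 * P + 8 * Q) * (Q - X / 2) ≤ (c₁ / 6 + 1) * L := by
          have hu1 : -(2 * P + 8 * Q) ≤ c₁ := by rw [hc₁def]; exact neg_le_abs _
          have hQX : 0 ≤ X / 2 - Q := by
            have := le_abs_self Q
            linarith
          have hA : (-(2 * P + 8 * Q)) * (X / 2 - Q) ≤ c₁ * (X / 2 - Q) :=
            mul_le_mul_of_nonneg_right hu1 hQX
          have hB : c₁ * (X / 2 - Q) ≤ c₁ * (X / 2 + |Q|) :=
            mul_le_mul_of_nonneg_left (by linarith [neg_abs_le Q]) hc₁0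
          have hcl : 0 ≤ c₁ * (L - 3 * X) := mul_nonneg hc₁0 (by linarith)
          have t1 : c₁ * X / 2 ≤ c₁ / 6 * L := by
            have h := div_nonneg hcl (by norm_num : (0:ℝ) ≤ 6)
            have e : c₁ * (L - 3 * X) / 6 = c₁ / 6 * L - c₁ * X / 2 := by ring
            rw [e] at h
            exact sub_nonneg.mp h
          have t2 : c₁ * |Q| ≤ X := by linarith
          have t3 : X ≤ 1 * L := by linarith
          calc (2 * P + 8 * Q) * (Q - X / 2)
              = (-(2 * P + 8 * Q)) * (X / 2 - Q) := by ring
            _ ≤ c₁ * (X / 2 - Q) := hA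
            _ ≤ c₁ * (X / 2 + |Q|) := hB
            _ = c₁ * X / 2 + c₁ * |Q| := by ring
            _ ≤ c₁ / 6 * L + 1 * L := add_le_add t1 (t2.trans t3)
            _ = (c₁ / 6 + 1) * L := by ring
        have h7 : ((1 + β) * Real.log a) * L ≤ (c₁ / 6 + 1) * L := by
          rw [h5]; exact h6
        have h8 := le_of_mul_le_mul_right h7 hL0
        exact h3.trans h8
    calc Real.exp (Real.log b * (2 + β)) = Real.exp (Real.log b) * Real.exp ((1 + β) * Real.log b) := by
          rw [← Real.exp_add, h1]
      _ ≤ Real.exp (Real.log b) * E := by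
          apply mul_le_mul_of_nonneg_left _ (Real.exp_nonneg _)
          rw [hEdef]
          exact Real.exp_le_exp.mpr h2
      _ = b * E := by rw [Real.exp_log hb0]
  have ha_nn : 0 ≤ a ^ (r + 1) := Real.rpow_nonneg ha0.le _
  have hfinal : (b ^ (r + 1) - a ^ (r + 1)) / (r + 1) ≤ 20 * E * δ * m ^ 2 * lam := by
    have h2β0 : 0 < r + 1 := by rw [hr1]; linarith
    have hnum : b ^ (r + 1) - a ^ (r + 1) ≤ b * E := by linarith
    have hstep1 : (b ^ (r + 1) - a ^ (r + 1)) / (r + 1) ≤ (b * E) / (r + 1) :=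
      (div_le_div_iff_of_pos_right h2β0).mpr hnum
    have hstep2 : (b * E) / (r + 1) ≤ 2 * (b * E) := by
      rw [div_le_iff₀ h2β0, hr1]
      have h := mul_le_mul_of_nonneg_left h2β (mul_pos hb0 hE0).le
      linarith [h]
    have h10 : (1 : ℝ) ≤ 10 * m ^ 2 * lam * X := by
      have hq : 0 ≤ lam * m ^ 2 * (5 * X - L) :=
        mul_nonneg (by positivity) (by linarith)
      linarith [hq, hLam]
    have hdiv : δ / X ≤ 10 * δ * m ^ 2 * lam := by
      rw [div_le_iff₀ hX0]
      have h := mul_le_mul_of_nonneg_left h10 hδ.le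
      linarith [h]
    have hfin2 : 2 * (b * E) ≤ 20 * E * δ * m ^ 2 * lam := by
      rw [hbX]
      have h2 := mul_le_mul_of_nonneg_left hdiv hE0.le
      linarith [h2]

    linarith
  calc (∫ s in a..b, s * Real.exp (c * Real.log s ^ 2)) ≤ ∫ x in a..b, x ^ r := hmono
    _ = (b ^ (r + 1) - a ^ (r + 1)) / (r + 1) := hval
    _ ≤ 20 * E * δ * m ^ 2 * lam := hfinal
end

section
/- Let φ : [α, β] → ℝ solve -φ'' = g on [α, β] with φ(α) = φ(β) = 0, where g ≥ 0 is continuous. Then 0 ≤ φ(t) ≤ max( ∫_α^{t₀} g(s)(s-α) ds , ∫_{t₀}^{β} g(s)(β-s) ds ) for every t ∈ [α,β] and every t₀ ∈ [α,β]. -/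
open Set MeasureTheory intervalIntegral

theorem two_point_bvp_bound (α β : ℝ) (hαβ : α < β) (g φ φ' : ℝ → ℝ)
    (hg_cont : ContinuousOn g (Set.Icc α β))
    (hg_nonneg : ∀ s ∈ Set.Icc α β, 0 ≤ g s)
    (hφ' : ∀ t ∈ Set.Icc α β, HasDerivAt φ (φ' t) t)
    (hφ'' : ∀ t ∈ Set.Icc α β, HasDerivAt φ' (-g t) t)
    (hα : φ α = 0) (hβ : φ β = 0) :
    ∀ t ∈ Set.Icc α β, ∀ t₀ ∈ Set.Icc α β,
      0 ≤ φ t ∧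
      φ t ≤ max (∫ s in α..t₀, g s * (s - α)) (∫ s in t₀..β, g s * (β - s)) := by
  have hle := hαβ.le
  -- continuous extension of g to all of ℝ
  set G : ℝ → ℝ := fun t => g ((Set.projIcc α β hle t : Set.Icc α β) : ℝ) with hGdef
  have hGeq : ∀ s ∈ Set.Icc α β, G s = g s := by
    intro s hs
    simp only [hGdef, Set.projIcc_of_mem hle hs]
  have hGcont : Continuous G :=
    hg_cont.comp_continuous (continuous_subtype_val.comp (continuous_projIcc))
      fun x => (Set.projIcc α β hle x).2
  have hGnn : ∀ s, 0 ≤ G s := fun s => hg_nonneg _ (Set.projIcc α β hle s).2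
  have hφ'cont : ContinuousOn φ' (Set.Icc α β) :=
    fun t ht => (hφ'' t ht).continuousAt.continuousWithinAt
  have hφcont : ContinuousOn φ (Set.Icc α β) :=
    fun t ht => (hφ' t ht).continuousAt.continuousWithinAt
  -- φ' is antitone
  have hanti : AntitoneOn φ' (Set.Icc α β) := by
    apply antitoneOn_of_deriv_nonpos (convex_Icc α β) hφ'cont
    · intro x hx
      rw [interior_Icc] at hx
      exact (hφ'' x (Set.Ioo_subset_Icc_self hx)).differentiableAt.differentiableWithinAt
    · intro x hx
      rw [interior_Icc] at hx
      rw [(hφ'' x (Set.Ioo_subset_Icc_self hx)).deriv]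
      simpa using hg_nonneg x (Set.Ioo_subset_Icc_self hx)
  -- nonnegativity
  have hnonneg : ∀ t ∈ Set.Icc α β, 0 ≤ φ t := by
    intro t ht
    rcases eq_or_lt_of_le ht.1 with h1 | h1
    · rw [← h1, hα]
    rcases eq_or_lt_of_le ht.2 with h2 | h2
    · rw [h2, hβ]
    by_contra hneg
    push_neg at hneg
    have hsub1 : Set.Icc α t ⊆ Set.Icc α β := Set.Icc_subset_Icc le_rfl ht.2
    have hsub2 : Set.Icc t β ⊆ Set.Icc α β := Set.Icc_subset_Icc ht.1 le_rfl
    obtain ⟨c₁, hc₁, hc₁'⟩ := exists_hasDerivAt_eq_slope φ φ' h1 (hφcont.mono hsub1)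
      (fun x hx => hφ' x (hsub1 (Set.Ioo_subset_Icc_self hx)))
    obtain ⟨c₂, hc₂, hc₂'⟩ := exists_hasDerivAt_eq_slope φ φ' h2 (hφcont.mono hsub2)
      (fun x hx => hφ' x (hsub2 (Set.Ioo_subset_Icc_self hx)))
    rw [hα, sub_zero] at hc₁'
    rw [hβ, zero_sub] at hc₂'
    have h1' : φ' c₁ < 0 := hc₁' ▸ div_neg_of_neg_of_pos hneg (by linarith)
    have h2' : 0 < φ' c₂ := hc₂' ▸ div_pos (by linarith) (by linarith [hc₂.1, hc₂.2])
    have := hanti (hsub1 (Set.Ioo_subset_Icc_self hc₁)) (hsub2 (Set.Ioo_subset_Icc_self hc₂))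
      (le_of_lt (hc₁.2.trans hc₂.1))
    linarith
  -- interval integrability of φ'
  have hφ'int : ∀ a ∈ Set.Icc α β, ∀ b ∈ Set.Icc α β, IntervalIntegrable φ' volume a b :=
    fun a ha b hb => (hφ'cont.mono (Set.uIcc_subset_Icc ha hb)).intervalIntegrable
  -- FTC for φ
  have hFTC : ∀ a ∈ Set.Icc α β, ∀ b ∈ Set.Icc α β, φ b - φ a = ∫ s in a..b, φ' s := by
    intro a ha b hb
    exact (integral_eq_sub_of_hasDerivAt (fun x hx => hφ' x (Set.uIcc_subset_Icc ha hb hx))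
      (hφ'int a ha b hb)).symm
  -- FTC for φ'
  have hFTC' : ∀ a ∈ Set.Icc α β, ∀ b ∈ Set.Icc α β,
      φ' b - φ' a = -∫ s in a..b, G s := by
    intro a ha b hb
    rw [← intervalIntegral.integral_neg]
    refine (integral_eq_sub_of_hasDerivAt (fun x hx => ?_)
      ((hGcont.neg).intervalIntegrable _ _)).symm
    have hx' := Set.uIcc_subset_Icc ha hb hx
    rw [Pi.neg_apply, hGeq x hx']
    exact hφ'' x hx'
  -- the antiderivative of G starting at t₀
  have hA' : ∀ t₀ : ℝ, ∀ s : ℝ, HasDerivAt (fun u => ∫ x in t₀..u, G x) (G s) s := by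
    intro t₀ s
    exact intervalIntegral.integral_hasDerivAt_right (hGcont.intervalIntegrable _ _)
      (hGcont.stronglyMeasurableAtFilter _ _) hGcont.continuousAt
  have hAcont : ∀ t₀ : ℝ, Continuous (fun u => ∫ x in t₀..u, G x) :=
    fun t₀ => continuous_iff_continuousAt.2 fun s => (hA' t₀ s).continuousAt
  -- key estimate, left case
  have keyA : ∀ t₀ ∈ Set.Icc α β, φ' t₀ ≤ 0 → ∀ t ∈ Set.Icc α t₀,
      φ t ≤ ∫ s in α..t₀, G s * (s - α) := by
    intro t₀ ht₀ hsign t ht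
    set A : ℝ → ℝ := fun u => ∫ x in t₀..u, G x with hAdef
    have htmem : t ∈ Set.Icc α β := ⟨ht.1, ht.2.trans ht₀.2⟩
    have hsubt : Set.Icc α t ⊆ Set.Icc α β := Set.Icc_subset_Icc le_rfl htmem.2
    have h1 : φ t = ∫ s in α..t, φ' s := by
      have := hFTC α ⟨le_rfl, hle⟩ t htmem
      rw [hα] at this; linarith
    have hbnd : ∀ s ∈ Set.Icc α t, φ' s ≤ -A s := by
      intro s hs
      have := hFTC' t₀ ht₀ s (hsubt hs)
      have hA : φ' s - φ' t₀ = -A s := this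
      linarith
    have h2 : ∫ s in α..t, φ' s ≤ ∫ s in α..t, -A s :=
      intervalIntegral.integral_mono_on ht.1 (hφ'int α ⟨le_rfl, hle⟩ t htmem)
        (((hAcont t₀).neg).intervalIntegrable _ _) hbnd
    have hAnonpos : ∀ u ∈ Set.Icc t t₀, 0 ≤ -A u := by
      intro u hu
      have : A u ≤ 0 := by
        rw [hAdef]
        simp only []
        rw [intervalIntegral.integral_symm]
        exact neg_nonpos.2 (intervalIntegral.integral_nonneg hu.2 (fun x _ => hGnn x))
      linarith
    have h3 : ∫ s in α..t, -A s ≤ ∫ s in α..t₀, -A s := by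
      have hsplit : (∫ s in α..t, -A s) + ∫ s in t..t₀, -A s = ∫ s in α..t₀, -A s :=
        intervalIntegral.integral_add_adjacent_intervals
          (((hAcont t₀).neg).intervalIntegrable _ _) (((hAcont t₀).neg).intervalIntegrable _ _)
      have hpos : 0 ≤ ∫ s in t..t₀, -A s :=
        intervalIntegral.integral_nonneg ht.2 hAnonpos
      linarith
    have hparts : ∫ s in α..t₀, -A s = ∫ s in α..t₀, G s * (s - α) := by
      have h := intervalIntegral.integral_mul_deriv_eq_deriv_mul
        (u := fun s => -A s) (v := fun s => s - α) (u' := fun s => -G s) (v' := fun _ => 1)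
        (a := α) (b := t₀)
        (fun x _ => (hA' t₀ x).neg) (fun x _ => (hasDerivAt_id x).sub_const α)
        ((hGcont.neg).intervalIntegrable _ _)
        (continuous_const.intervalIntegrable _ _)
      simp only [mul_one, hAdef, intervalIntegral.integral_same, neg_zero, zero_mul,
        sub_self, mul_zero, zero_sub, neg_mul, intervalIntegral.integral_neg, neg_neg,
        zero_add] at h
      simpa using h
    calc φ t = ∫ s in α..t, φ' s := h1
      _ ≤ ∫ s in α..t, -A s := h2
      _ ≤ ∫ s in α..t₀, -A s := h3
      _ = ∫ s in α..t₀, G s * (s - α) := hparts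
  -- key estimate, right case
  have keyB : ∀ t₀ ∈ Set.Icc α β, 0 ≤ φ' t₀ → ∀ t ∈ Set.Icc t₀ β,
      φ t ≤ ∫ s in t₀..β, G s * (β - s) := by
    intro t₀ ht₀ hsign t ht
    set B : ℝ → ℝ := fun u => ∫ x in t₀..u, G x with hBdef
    have htmem : t ∈ Set.Icc α β := ⟨ht₀.1.trans ht.1, ht.2⟩
    have hsubt : Set.Icc t β ⊆ Set.Icc α β := Set.Icc_subset_Icc htmem.1 le_rfl
    have h1 : φ t = ∫ s in t..β, -φ' s := by
      have := hFTC t htmem β ⟨hle, le_rfl⟩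
      rw [hβ, intervalIntegral.integral_neg] at *
      linarith
    have hbnd : ∀ s ∈ Set.Icc t β, -φ' s ≤ B s := by
      intro s hs
      have := hFTC' t₀ ht₀ s (hsubt hs)
      have hB : φ' s - φ' t₀ = -B s := this
      linarith
    have h2 : ∫ s in t..β, -φ' s ≤ ∫ s in t..β, B s :=
      intervalIntegral.integral_mono_on ht.2 ((hφ'int t htmem β ⟨hle, le_rfl⟩).neg)
        ((hAcont t₀).intervalIntegrable _ _) hbnd
    have hBnonneg : ∀ u ∈ Set.Icc t₀ t, 0 ≤ B u := fun u hu =>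
      intervalIntegral.integral_nonneg hu.1 (fun x _ => hGnn x)
    have h3 : ∫ s in t..β, B s ≤ ∫ s in t₀..β, B s := by
      have hsplit : (∫ s in t₀..t, B s) + ∫ s in t..β, B s = ∫ s in t₀..β, B s :=
        intervalIntegral.integral_add_adjacent_intervals
          ((hAcont t₀).intervalIntegrable _ _) ((hAcont t₀).intervalIntegrable _ _)
      have hpos : 0 ≤ ∫ s in t₀..t, B s := intervalIntegral.integral_nonneg ht.1 hBnonneg
      linarith
    have hparts : ∫ s in t₀..β, B s = ∫ s in t₀..β, G s * (β - s) := by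
      have h := intervalIntegral.integral_mul_deriv_eq_deriv_mul
        (u := B) (v := fun s => s - β) (u' := G) (v' := fun _ => 1) (a := t₀) (b := β)
        (fun x _ => hA' t₀ x) (fun x _ => (hasDerivAt_id x).sub_const β)
        (hGcont.intervalIntegrable _ _) (continuous_const.intervalIntegrable _ _)
      simp only [mul_one, hBdef, intervalIntegral.integral_same, sub_self, mul_zero,
        zero_mul, zero_sub] at h
      rw [h, ← intervalIntegral.integral_neg]
      apply intervalIntegral.integral_congr
      intro x _
      ring
    calc φ t = ∫ s in t..β, -φ' s := h1
      _ ≤ ∫ s in t..β, B s := h2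
      _ ≤ ∫ s in t₀..β, B s := h3
      _ = ∫ s in t₀..β, G s * (β - s) := hparts
  -- assemble
  intro t ht t₀ ht₀
  refine ⟨hnonneg t ht, ?_⟩
  have hIeq1 : (∫ s in α..t₀, g s * (s - α)) = ∫ s in α..t₀, G s * (s - α) := by
    apply intervalIntegral.integral_congr
    intro x hx
    show g x * (x - α) = G x * (x - α)
    rw [hGeq x (Set.uIcc_subset_Icc ⟨le_rfl, hle⟩ ht₀ hx)]
  have hIeq2 : (∫ s in t₀..β, g s * (β - s)) = ∫ s in t₀..β, G s * (β - s) := by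
    apply intervalIntegral.integral_congr
    intro x hx
    show g x * (β - x) = G x * (β - x)
    rw [hGeq x (Set.uIcc_subset_Icc ht₀ ⟨hle, le_rfl⟩ hx)]
  rw [hIeq1, hIeq2]
  rcases le_total (φ' t₀) 0 with hsign | hsign
  · refine le_trans ?_ (le_max_left _ _)
    rcases le_total t t₀ with htt | htt
    · exact keyA t₀ ht₀ hsign t ⟨ht.1, htt⟩
    · have hmono : φ t ≤ φ t₀ := by
        have hF := hFTC t₀ ht₀ t ht
        have hneg : (∫ s in t₀..t, φ' s) ≤ 0 := by
          have : (∫ s in t₀..t, φ' s) ≤ ∫ s in t₀..t, (0 : ℝ) :=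
            intervalIntegral.integral_mono_on htt (hφ'int t₀ ht₀ t ht)
              (continuous_const.intervalIntegrable _ _)
              (fun s hs => (hanti ht₀ ⟨ht₀.1.trans hs.1, hs.2.trans ht.2⟩ hs.1).trans hsign)
          simpa using this
        linarith
      exact hmono.trans (keyA t₀ ht₀ hsign t₀ ⟨ht₀.1, le_rfl⟩)
  · refine le_trans ?_ (le_max_right _ _)
    rcases le_total t₀ t with htt | htt
    · exact keyB t₀ ht₀ hsign t ⟨htt, ht.2⟩
    · have hmono : φ t ≤ φ t₀ := by
        have hF := hFTC t ht t₀ ht₀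
        have hpos : 0 ≤ ∫ s in t..t₀, φ' s :=
          intervalIntegral.integral_nonneg htt
            (fun s hs => hsign.trans (hanti ⟨ht.1.trans hs.1, hs.2.trans ht₀.2⟩ ht₀ hs.2))
        linarith
      exact hmono.trans (keyB t₀ ht₀ hsign t₀ ⟨le_rfl, ht₀.2⟩)
end
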